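/- Hero-and-sidekick lower bound: for every even n ≥ 8 there exists a preference network on n members such that at least 2^{n/2} distinct subsets satisfy both the Group Stability and Self-Approval axioms. Specifically, partition V into n/2 hero–sidekick pairs, where each member of a pair ranks first its hero, then its sidekick, then all other heroes, then all other sidekicks; then every set consisting of all heroes together with an arbitrary set of sidekicks is group stable and self-approving. -/

import Mathlib

/-- A preference (linear order) on `V`, given as a ranking bijection; `u ≻_π v` iff `π u < π v`. -/
abbrev Pref (V : Type*) [Fintype V] : Type _ := V ≃ Fin (Fintype.card V)

/-- Group stability of `S` w.r.t. profile `P`: for every nonempty `G ⊊ S`, every equal-size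
`G' ⊆ V − S`, and every family of bijections `(f_s : G → G')_{s ∈ S−G}`, some `s ∈ S − G`
and `u ∈ G` satisfy `u ≻_{π_s} f_s(u)`. -/
def GroupStable {V : Type*} [Fintype V] [DecidableEq V]
    (P : V → Pref V) (S : Finset V) : Prop :=
  ∀ G : Finset V, G ⊂ S → G.Nonempty → ∀ G' : Finset V, (∀ x ∈ G', x ∉ S) →
    G'.card = G.card →
    ∀ f : ↥(S \ G) → ↥G → ↥G', (∀ s, Function.Bijective (f s)) →
      ∃ s : ↥(S \ G), ∃ u : ↥G, P s.1 u.1 < P s.1 (f s u).1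

/-- Self-approval of `S` w.r.t. profile `P`: for every `G' ⊆ V − S` with `|G'| = |S|` and
every family of bijections `(f_s : S → G')_{s ∈ S}`, some `s, u ∈ S` satisfy
`u ≻_{π_s} f_s(u)`. -/
def SelfApprove {V : Type*} [Fintype V] [DecidableEq V]
    (P : V → Pref V) (S : Finset V) : Prop :=
  ∀ G' : Finset V, (∀ x ∈ G', x ∉ S) → G'.card = S.card →
    ∀ f : ↥S → ↥S → ↥G', (∀ s, Function.Bijective (f s)) →
      ∃ s u : ↥S, P s.1 u.1 < P s.1 (f s u).1

namespace Stmt17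

def rk (m : ℕ) (i : Fin m) (v : Fin (2*m)) : ℕ :=
  if (v:ℕ) = 2*(i:ℕ) then 0
  else if (v:ℕ) = 2*(i:ℕ)+1 then 1
  else if (v:ℕ) % 2 = 0 then (if (v:ℕ)/2 < (i:ℕ) then (v:ℕ)/2+2 else (v:ℕ)/2+1)
  else (if (v:ℕ)/2 < (i:ℕ) then m+1+(v:ℕ)/2 else m+(v:ℕ)/2)

lemma rk_lt (m : ℕ) (i : Fin m) (v : Fin (2*m)) : rk m i v < 2*m := by
  have hv := v.2; have hi := i.2
  simp only [rk]; split_ifs <;> omega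

lemma rk_inj (m : ℕ) (i : Fin m) : Function.Injective (rk m i) := by
  intro v w h
  have hv := v.2; have hw := w.2; have hi := i.2
  apply Fin.ext
  simp only [rk] at h; split_ifs at h <;> omega

lemma rk_eq_zero (m : ℕ) (i : Fin m) (v : Fin (2*m)) (h : (v:ℕ) = 2*(i:ℕ)) :
    rk m i v = 0 := by simp [rk, h]

lemma rk_eq_one (m : ℕ) (i : Fin m) (v : Fin (2*m)) (h : (v:ℕ) = 2*(i:ℕ)+1) :
    rk m i v = 1 := by
  have hi := i.2; simp only [rk]; split_ifs <;> omega

lemma rk_pos (m : ℕ) (i : Fin m) (v : Fin (2*m)) (h : (v:ℕ) ≠ 2*(i:ℕ)) :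
    0 < rk m i v := by
  have hi := i.2; have hv := v.2; simp only [rk]; split_ifs <;> omega

lemma rk_hero_le (m : ℕ) (i : Fin m) (v : Fin (2*m)) (h : (v:ℕ) % 2 = 0) :
    rk m i v ≤ m := by
  have hi := i.2; have hv := v.2; simp only [rk]; split_ifs <;> omega

lemma rk_sk_ge (m : ℕ) (i : Fin m) (v : Fin (2*m)) (h : (v:ℕ) % 2 = 1)
    (h2 : (v:ℕ) ≠ 2*(i:ℕ)+1) : m+1 ≤ rk m i v := by
  have hi := i.2; have hv := v.2; simp only [rk]; split_ifs <;> omega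

noncomputable def pref (m : ℕ) (i : Fin m) : Fin (2*m) ≃ Fin (2*m) :=
  Equiv.ofBijective (fun v => ⟨rk m i v, rk_lt m i v⟩)
    (Finite.injective_iff_bijective.1 (fun _ _ h => rk_inj m i (congrArg Fin.val h)))

def pairIdx (m : ℕ) (v : Fin (2*m)) : Fin m := ⟨(v:ℕ)/2, by have := v.2; omega⟩

noncomputable def profile (m : ℕ) : Fin (2*m) → Pref (Fin (2*m)) := fun v =>
  (pref m (pairIdx m v)).trans (finCongr (Fintype.card_fin (2*m)).symm)

lemma profile_lt (m : ℕ) (s u u' : Fin (2*m)) :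
    profile m s u < profile m s u' ↔ rk m (pairIdx m s) u < rk m (pairIdx m s) u' := by
  simp [profile, pref, Fin.lt_def, Equiv.ofBijective]

def hero (m : ℕ) (i : Fin m) : Fin (2*m) := ⟨2*(i:ℕ), by have := i.2; omega⟩
def sk (m : ℕ) (i : Fin m) : Fin (2*m) := ⟨2*(i:ℕ)+1, by have := i.2; omega⟩

lemma pairIdx_hero (m : ℕ) (i : Fin m) : pairIdx m (hero m i) = i := by
  apply Fin.ext; simp [pairIdx, hero]

lemma pairIdx_sk (m : ℕ) (i : Fin m) : pairIdx m (sk m i) = i := by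
  apply Fin.ext; simp [pairIdx, sk]; omega

def ST (m : ℕ) (T : Finset (Fin m)) : Finset (Fin (2*m)) :=
  Finset.univ.image (hero m) ∪ T.image (sk m)

lemma mem_ST (m : ℕ) (T : Finset (Fin m)) (v : Fin (2*m)) :
    v ∈ ST m T ↔ ((v:ℕ) % 2 = 0 ∨ ((v:ℕ) % 2 = 1 ∧ pairIdx m v ∈ T)) := by
  constructor
  · intro h
    rcases Finset.mem_union.1 h with h | h
    · obtain ⟨i, -, hi⟩ := Finset.mem_image.1 h
      left; rw [← hi]; simp [hero]
    · obtain ⟨i, hiT, hi⟩ := Finset.mem_image.1 h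
      right; rw [← hi]
      refine ⟨by simp [sk], ?_⟩
      rwa [pairIdx_sk]
  · rintro (h | ⟨h1, h2⟩)
    · apply Finset.mem_union_left
      apply Finset.mem_image.2 ⟨pairIdx m v, Finset.mem_univ _, ?_⟩
      apply Fin.ext; simp [hero, pairIdx]; omega
    · apply Finset.mem_union_right
      apply Finset.mem_image.2 ⟨pairIdx m v, h2, ?_⟩
      apply Fin.ext; simp [sk, pairIdx]; omega

lemma heroST (m : ℕ) (T : Finset (Fin m)) (i : Fin m) : hero m i ∈ ST m T :=
  (mem_ST m T _).2 (Or.inl (Nat.mul_mod_right 2 _))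

lemma notin_ST_odd (m : ℕ) (T : Finset (Fin m)) (v : Fin (2*m)) (h : v ∉ ST m T) :
    (v:ℕ) % 2 = 1 := by
  by_contra h'
  exact h ((mem_ST m T v).2 (Or.inl (by omega)))

lemma sk_mem_ST (m : ℕ) (T : Finset (Fin m)) (i : Fin m) :
    sk m i ∈ ST m T ↔ i ∈ T := by
  rw [mem_ST, pairIdx_sk]
  have h : ((sk m i : Fin (2*m)):ℕ) % 2 = 1 := by
    show (2*(i:ℕ)+1) % 2 = 1; omega
  simp [h]

lemma sa (m : ℕ) (hm : 4 ≤ m) (T : Finset (Fin m)) :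
    SelfApprove (profile m) (ST m T) := by
  intro G' hG' hcard f hf
  set i0 : Fin m := ⟨0, by omega⟩ with hi0
  set s : ↥(ST m T) := ⟨hero m i0, heroST m T i0⟩ with hs
  refine ⟨s, s, ?_⟩
  rw [profile_lt]
  have hps : pairIdx m (s : Fin (2*m)) = i0 := pairIdx_hero m i0
  rw [hps]
  have h0 : rk m i0 (s : Fin (2*m)) = 0 := rk_eq_zero _ _ _ rfl
  rw [h0]
  apply rk_pos
  have hodd := notin_ST_odd m T _ (hG' _ (f s s).2)
  omega

lemma gs (m : ℕ) (hm : 4 ≤ m) (T : Finset (Fin m)) :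
    GroupStable (profile m) (ST m T) := by
  intro G hGS hGne G' hG' hcard f hf
  have hodd : ∀ x ∈ G', (x:ℕ) % 2 = 1 := fun x hx => notin_ST_odd m T x (hG' x hx)
  have hGsub : G ⊆ ST m T := hGS.subset
  by_cases ha : ∃ v ∈ G, (v:ℕ) % 2 = 1 ∧ hero m (pairIdx m v) ∉ G
  · -- a sidekick in G whose hero is outside G
    obtain ⟨v, hvG, hvodd, hvh⟩ := ha
    set s : ↥(ST m T \ G) :=
      ⟨hero m (pairIdx m v), Finset.mem_sdiff.2 ⟨heroST m T _, hvh⟩⟩ with hs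
    set u : ↥G := ⟨v, hvG⟩ with hu
    refine ⟨s, u, ?_⟩
    rw [profile_lt]
    have hps : pairIdx m (s : Fin (2*m)) = pairIdx m v := pairIdx_hero m _
    rw [hps]
    have h1 : rk m (pairIdx m v) (u : Fin (2*m)) = 1 := by
      apply rk_eq_one
      show (v:ℕ) = 2*((v:ℕ)/2)+1; omega
    rw [h1]
    have hwodd := hodd _ (f s u).2
    have hwne : (((f s u : ↥G') : Fin (2*m)):ℕ) ≠ 2*((pairIdx m v : Fin m):ℕ)+1 := by
      intro hc
      have hvv : (v:ℕ) = 2*((v:ℕ)/2)+1 := by omega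
      have hfv : ((f s u : ↥G') : Fin (2*m)) = v := by
        apply Fin.ext; show _ = (v:ℕ); rw [hc]; exact hvv.symm
      exact hG' _ (f s u).2 (hfv ▸ hGsub hvG)
    have := rk_sk_ge m (pairIdx m v) _ hwodd hwne
    omega
  by_cases hc : ∀ i : Fin m, hero m i ∈ G
  · -- all heroes are in G; take a sidekick s ∈ S \ G, its hero is in G
    obtain ⟨x, hxS, hxG⟩ := Finset.exists_of_ssubset hGS
    have hxodd : (x:ℕ) % 2 = 1 := by
      by_contra h
      have hx0 : (x:ℕ) % 2 = 0 := by omega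
      have hxh : hero m (pairIdx m x) = x := by
        apply Fin.ext; show 2*((x:ℕ)/2) = (x:ℕ); omega
      exact hxG (hxh ▸ hc (pairIdx m x))
    set s : ↥(ST m T \ G) := ⟨x, Finset.mem_sdiff.2 ⟨hxS, hxG⟩⟩ with hs
    set u : ↥G := ⟨hero m (pairIdx m x), hc _⟩ with hu
    refine ⟨s, u, ?_⟩
    rw [profile_lt]
    have h0 : rk m (pairIdx m (s : Fin (2*m))) (u : Fin (2*m)) = 0 := rk_eq_zero _ _ _ rfl
    rw [h0]
    apply rk_pos
    have hwodd := hodd _ (f s u).2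
    omega
  -- case d : not all heroes in G, and every sidekick of G has its hero in G
  push_neg at ha hc
  have hGhero : ∀ v ∈ G, hero m (pairIdx m v) ∈ G := by
    intro v hv
    rcases Nat.mod_two_eq_zero_or_one (v:ℕ) with h | h
    · have hvh : hero m (pairIdx m v) = v := by
        apply Fin.ext; show 2*((v:ℕ)/2) = (v:ℕ); omega
      rwa [hvh]
    · exact ha v hv h
  obtain ⟨g, hg⟩ := hGne
  have hHero : hero m (pairIdx m g) ∈ G := hGhero g hg
  obtain ⟨j0, hj0⟩ := hc
  by_cases hd : ∃ i i' : Fin m, i ≠ i' ∧ hero m i ∈ G ∧ hero m i' ∈ G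
  · -- at least two heroes in G
    obtain ⟨i, i', hne, hiG, hi'G⟩ := hd
    set s : ↥(ST m T \ G) := ⟨hero m j0, Finset.mem_sdiff.2 ⟨heroST m T _, hj0⟩⟩ with hs
    set u1 : ↥G := ⟨hero m i, hiG⟩ with hu1
    set u2 : ↥G := ⟨hero m i', hi'G⟩ with hu2
    have hne12 : f s u1 ≠ f s u2 := by
      intro h
      apply hne
      have h2 := (hf s).1 h
      have h3 : ((u1 : Fin (2*m)):ℕ) = ((u2 : Fin (2*m)):ℕ) := by rw [h2]
      have h4 : 2*(i:ℕ) = 2*(i':ℕ) := h3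
      exact Fin.ext (by omega)
    have hex : ∃ u : ↥G, ((u : Fin (2*m)):ℕ) % 2 = 0 ∧
        (((f s u : ↥G') : Fin (2*m)):ℕ) ≠ 2*(j0:ℕ)+1 := by
      by_cases h1 : (((f s u1 : ↥G') : Fin (2*m)):ℕ) = 2*(j0:ℕ)+1
      · refine ⟨u2, Nat.mul_mod_right 2 _, ?_⟩
        intro h2
        exact hne12 (Subtype.ext (Fin.ext (by omega)))
      · exact ⟨u1, Nat.mul_mod_right 2 _, h1⟩
    obtain ⟨u, hueven, hufne⟩ := hex
    refine ⟨s, u, ?_⟩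
    rw [profile_lt]
    have hps : pairIdx m (s : Fin (2*m)) = j0 := pairIdx_hero m j0
    rw [hps]
    have hle := rk_hero_le m j0 _ hueven
    have hge := rk_sk_ge m j0 _ (hodd _ (f s u).2) hufne
    omega
  · -- exactly one hero in G
    push_neg at hd
    set i0 : Fin m := pairIdx m g with hi0
    have huniq : ∀ i : Fin m, hero m i ∈ G → i = i0 := by
      intro i hi
      by_contra hne
      exact hd i i0 hne hi hHero
    have hGsub2 : G ⊆ {hero m i0, sk m i0} := by
      intro v hv
      have hvi : pairIdx m v = i0 := huniq _ (hGhero v hv)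
      rcases Nat.mod_two_eq_zero_or_one (v:ℕ) with h | h
      · have : v = hero m i0 := by
          apply Fin.ext
          have := congrArg Fin.val hvi
          show (v:ℕ) = 2*(i0:ℕ)
          simp [pairIdx] at this
          omega
        simp [this]
      · have : v = sk m i0 := by
          apply Fin.ext
          have := congrArg Fin.val hvi
          show (v:ℕ) = 2*(i0:ℕ)+1
          simp [pairIdx] at this
          omega
        simp [this]
    have hcard2 : G'.card ≤ 2 := by
      rw [hcard]
      calc G.card ≤ ({hero m i0, sk m i0} : Finset (Fin (2*m))).card :=
            Finset.card_le_card hGsub2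
        _ ≤ 2 := (Finset.card_insert_le _ _).trans (by simp)
    set Bad : Finset (Fin m) := insert i0 (G'.image (pairIdx m)) with hBad
    have hBadcard : Bad.card ≤ 3 := by
      calc Bad.card ≤ (G'.image (pairIdx m)).card + 1 := Finset.card_insert_le _ _
        _ ≤ 3 := by have := Finset.card_image_le (s := G') (f := pairIdx m); omega
    have hexj : ∃ j : Fin m, j ∉ Bad := by
      by_contra h
      push_neg at h
      have hsub : (Finset.univ : Finset (Fin m)) ⊆ Bad := fun j _ => h j
      have := Finset.card_le_card hsub
      rw [Finset.card_univ, Fintype.card_fin] at this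
      omega
    obtain ⟨j, hj⟩ := hexj
    have hji0 : j ≠ i0 := fun h => hj (h ▸ Finset.mem_insert_self _ _)
    have hjG : hero m j ∉ G := fun h => hji0 (huniq j h)
    have hskj : ∀ w : Fin (2*m), w ∈ G' → (w:ℕ) ≠ 2*(j:ℕ)+1 := by
      intro w hw hcEq
      apply hj
      apply Finset.mem_insert_of_mem
      refine Finset.mem_image.2 ⟨w, hw, ?_⟩
      apply Fin.ext; show (w:ℕ)/2 = (j:ℕ); omega
    set s : ↥(ST m T \ G) := ⟨hero m j, Finset.mem_sdiff.2 ⟨heroST m T _, hjG⟩⟩ with hs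
    set u : ↥G := ⟨hero m i0, hHero⟩ with hu
    refine ⟨s, u, ?_⟩
    rw [profile_lt]
    have hps : pairIdx m (s : Fin (2*m)) = j := pairIdx_hero m j
    rw [hps]
    have hle := rk_hero_le m j (u : Fin (2*m)) (Nat.mul_mod_right 2 _)
    have hge := rk_sk_ge m j _ (hodd _ (f s u).2) (hskj _ (f s u).2)
    omega

end Stmt17


/-- hero-and-sidekick lower bound: for every even `n ≥ 8` there is a
preference network on `n` members in which at least `2^(n/2)` distinct subsets satisfy
both the Group Stability and Self-Approval axioms. -/
theorem stmt_17 (n : ℕ) (h8 : 8 ≤ n) (heven : n % 2 = 0) :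
    ∃ P : Fin n → Pref (Fin n),
      2 ^ (n / 2) ≤
        Nat.card {S : Finset (Fin n) // GroupStable P S ∧ SelfApprove P S} := by

  obtain ⟨m, rfl⟩ : ∃ m, n = 2*m := ⟨n/2, by omega⟩
  have hm : 4 ≤ m := by omega
  refine ⟨Stmt17.profile m, ?_⟩
  have h2 : 2*m/2 = m := by omega
  rw [h2]
  have hinj : Function.Injective (fun T : Finset (Fin m) =>
      (⟨Stmt17.ST m T, Stmt17.gs m hm T, Stmt17.sa m hm T⟩ :
        {S : Finset (Fin (2*m)) //
          GroupStable (Stmt17.profile m) S ∧ SelfApprove (Stmt17.profile m) S})) := by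
    intro T T' h
    have hST : Stmt17.ST m T = Stmt17.ST m T' := congrArg Subtype.val h
    ext i
    rw [← Stmt17.sk_mem_ST m T i, ← Stmt17.sk_mem_ST m T' i, hST]
  calc 2^m = Nat.card (Finset (Fin m)) := by simp [Nat.card_eq_fintype_card]
    _ ≤ _ := Nat.card_le_card_of_injective _ hinj
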